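/- Let X be a nonempty subset of Zar(F) such that A(X) = ⋂_{V∈X} V contains a local subring whose residue field has cardinality α, and suppose |X| < ℵ₀ · α. Then A(X) is a Prüfer domain with quotient field F. -/

import Mathlib

open Set

/-- A subring `V` of a field `F` is a valuation ring of `F` (with quotient field `F`). -/
def IsValSubring (F : Type*) [Field F] (V : Subring F) : Prop :=
  ∀ t : F, t ≠ 0 → t ∈ V ∨ t⁻¹ ∈ V

/-- The Zariski-Riemann space of the field `F`: the set of valuation rings of `F`. -/
def Zar (F : Type*) [Field F] : Type _ := {V : Subring F // IsValSubring F V}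

/-- The patch (constructible) topology on `Zar F`, generated by the sets
`{V : x ∈ V}` and `{V : y ∉ V}` for `x, y ∈ F`. -/
instance Zar.patchTopology (F : Type*) [Field F] : TopologicalSpace (Zar F) :=
  TopologicalSpace.generateFrom
    ({S | ∃ x : F, S = {V : Zar F | x ∈ V.1}} ∪ {S | ∃ y : F, S = {V : Zar F | y ∉ V.1}})

variable {F : Type*} [Field F]

/-- The maximal ideal of a valuation ring of `F`, as a subset of `F`. -/
def mIdeal (V : Zar F) : Set F := {x : F | x ∈ V.1 ∧ (x = 0 ∨ x⁻¹ ∉ V.1)}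

/-- `A(X)`: the intersection of the valuation rings in `X`, as a subset of `F`. -/
def aSet (X : Set (Zar F)) : Set F := ⋂ V ∈ X, ((V : Zar F).1 : Set F)

/-- `A(X)` as a subring of `F`. -/
def ASub (X : Set (Zar F)) : Subring F := ⨅ V ∈ X, (V : Zar F).1

/-- `J(X)`: the intersection of the maximal ideals of the valuation rings in `X`. -/
def jSet (X : Set (Zar F)) : Set F := ⋂ V ∈ X, mIdeal V

/-- The set of limit points of `X` in the patch topology of `Zar F`. -/
def limPts (X : Set (Zar F)) : Set (Zar F) :=
  {V : Zar F | ∀ U : Set (Zar F), IsOpen U → V ∈ U → ∃ W ∈ X, W ≠ V ∧ W ∈ U}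


/-- A subset `A` of `F` has quotient field `F` if every element of `F` is a quotient
of elements of `A`. -/
def HasQFSet (A : Set F) : Prop := ∀ x : F, ∃ a ∈ A, ∃ b ∈ A, b ≠ 0 ∧ x = a / b

/-- The localization of the subring `A` of `F` at the ideal `M`, realized inside `F`. -/
def locSet (A : Subring F) (M : Ideal A) : Set F :=
  {x : F | ∃ a b : A, b ∉ M ∧ (b : F) ≠ 0 ∧ x = (a : F) / (b : F)}

/-- `A` is a Prüfer domain with quotient field `F`: `F` is the quotient field of `A` and
the localization of `A` at each maximal ideal is a valuation ring of `F`. -/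
def IsPruferOf (A : Subring F) : Prop :=
  HasQFSet (A : Set F) ∧ ∀ M : Ideal A, M.IsMaximal →
    ∀ t : F, t ≠ 0 → t ∈ locSet A M ∨ t⁻¹ ∈ locSet A M

-- aux
lemma zar_inv_mem {V : Zar F} {x : F} (hx : x ≠ 0) (h : x ∉ V.1) : x⁻¹ ∈ V.1 :=
  (V.2 x hx).resolve_left h

lemma small_mem {V : Zar F} {x : F} (h : x ∈ mIdeal V) : x ∈ V.1 := h.1

lemma not_mem_of_inv_small {V : Zar F} {x : F} (hx : x ≠ 0) (h : x⁻¹ ∈ mIdeal V) :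
    x ∉ V.1 := by
  rcases h.2 with h0 | h0
  · exact absurd (inv_eq_zero.mp h0) hx
  · rwa [inv_inv] at h0

lemma inv_small_of_not_mem {V : Zar F} {x : F} (h : x ∉ V.1) : x⁻¹ ∈ mIdeal V := by
  have hx : x ≠ 0 := fun h0 => h (h0 ▸ (V.1.zero_mem))
  exact ⟨zar_inv_mem hx h, Or.inr (by rwa [inv_inv])⟩

lemma zsmall_mul {V : Zar F} {x y : F} (hx : x ∈ mIdeal V) (hy : y ∈ V.1) :
    x * y ∈ mIdeal V := by
  refine ⟨mul_mem hx.1 hy, ?_⟩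
  rcases hx.2 with h0 | hinv
  · exact Or.inl (by simp [h0])
  · by_cases hxy : x * y = 0
    · exact Or.inl hxy
    · refine Or.inr fun hmem => hinv ?_
      have hx0 : x ≠ 0 := fun h => hxy (by simp [h])
      have hy0 : y ≠ 0 := fun h => hxy (by simp [h])
      have : x⁻¹ = y * (x * y)⁻¹ := by field_simp
      exact this ▸ mul_mem hy hmem

lemma zsmall_neg {V : Zar F} {x : F} (hx : x ∈ mIdeal V) : -x ∈ mIdeal V := by
  have : -x = x * (-1) := by ring
  exact this ▸ zsmall_mul hx (V.1.neg_mem V.1.one_mem)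

lemma one_not_small {V : Zar F} : (1 : F) ∉ mIdeal V := by
  rintro ⟨-, h | h⟩
  · simp at h
  · exact h (by simpa using V.1.one_mem)

lemma zsmall_add {V : Zar F} {x y : F} (hx : x ∈ mIdeal V) (hy : y ∈ mIdeal V) :
    x + y ∈ mIdeal V := by
  by_cases hx0 : x = 0
  · simpa [hx0] using hy
  by_cases hy0 : y = 0
  · simpa [hy0] using hx
  rcases V.2 (x / y) (by simp [hx0, hy0]) with h | h
  · have : x + y = y * (1 + x / y) := by field_simp; ring
    rw [this]
    exact zsmall_mul hy (V.1.add_mem V.1.one_mem h)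
  · rw [inv_div] at h
    have : x + y = x * (1 + y / x) := by field_simp
    rw [this]
    exact zsmall_mul hx (V.1.add_mem V.1.one_mem h)

lemma one_add_small {V : Zar F} {x : F} (hx : x ∈ mIdeal V) :
    (1 + x) ∈ V.1 ∧ (1 + x)⁻¹ ∈ V.1 ∧ (1 : F) + x ≠ 0 := by
  have hne : (1 : F) + x ≠ 0 := by
    intro h0
    have : (1 : F) = -x := by linear_combination h0
    exact one_not_small (V := V) (this ▸ zsmall_neg hx)
  have hmem : (1 : F) + x ∈ V.1 := V.1.add_mem V.1.one_mem hx.1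
  refine ⟨hmem, ?_, hne⟩
  by_contra hinv
  have hsm : (1 + x) ∈ mIdeal V := ⟨hmem, Or.inr hinv⟩
  have : (1 : F) ∈ mIdeal V := by
    have := zsmall_add hsm (zsmall_neg hx)
    simpa using this
  exact one_not_small this

lemma inv_mem_of_not_small {V : Zar F} {x : F} (hx : x ≠ 0) (hmem : x ∈ V.1)
    (h : x ∉ mIdeal V) : x⁻¹ ∈ V.1 := by
  by_contra hinv
  exact h ⟨hmem, Or.inr hinv⟩

/-- The key per-valuation-ring verification. -/
lemma perV (V : Zar F) {t s : F} (ht : t ≠ 0) (hs : s ≠ 0) (h1s : 1 + s ≠ 0)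
    (hN : t ∉ V.1 → t / s ∈ V.1)
    (hP : t ∈ mIdeal V → s / t ∈ V.1)
    (hU : t ∈ V.1 → t⁻¹ ∈ V.1 → (1 + s) ∉ mIdeal V) :
    (1 + s)⁻¹ ∈ V.1 ∧ (1 + s)⁻¹ * t ∈ V.1 ∧ (1 - (1 + s)⁻¹) * t⁻¹ ∈ V.1 := by
  by_cases htV : t ∈ V.1
  · by_cases hti : t⁻¹ ∈ V.1
    · -- t is a unit of V
      have hns := hU htV hti
      have hu : (1 + s)⁻¹ ∈ V.1 := by
        by_cases hmem : (1 + s) ∈ V.1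
        · exact inv_mem_of_not_small h1s hmem hns
        · exact zar_inv_mem h1s hmem
      exact ⟨hu, mul_mem hu htV,
        mul_mem (V.1.sub_mem V.1.one_mem hu) hti⟩
    · -- t ∈ mIdeal V
      have htsm : t ∈ mIdeal V := ⟨htV, Or.inr hti⟩
      have hst := hP htsm
      have hssm : s ∈ mIdeal V := by
        have hrw : s = t * (s / t) := by field_simp
        rw [hrw]
        exact zsmall_mul htsm hst
      have h1 := one_add_small hssm
      refine ⟨h1.2.1, mul_mem h1.2.1 htV, ?_⟩
      have : (1 - (1 + s)⁻¹) * t⁻¹ = s / t * (1 + s)⁻¹ := by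
        rw [div_mul_eq_mul_div, eq_div_iff ht]
        have h2 := h1.2.2
        field_simp
        ring
      rw [this]
      exact mul_mem hst h1.2.1
  · -- t ∉ V
    have hts := hN htV
    have hsV : s ∉ V.1 := by
      intro hsV
      have : t = t / s * s := by field_simp
      exact htV (this ▸ mul_mem hts hsV)
    have hsi : s⁻¹ ∈ mIdeal V := inv_small_of_not_mem hsV
    have h1si : (1 : F) + s⁻¹ ≠ 0 := (one_add_small hsi).2.2
    have hui : (1 + s)⁻¹ = s⁻¹ * (1 + s⁻¹)⁻¹ := by
      rw [← mul_inv]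
      congr 1
      field_simp
      ring
    have hu : (1 + s)⁻¹ ∈ V.1 := by
      rw [hui]; exact mul_mem hsi.1 (one_add_small hsi).2.1
    refine ⟨hu, ?_, mul_mem (V.1.sub_mem V.1.one_mem hu) (zar_inv_mem ht htV)⟩
    have : (1 + s)⁻¹ * t = t / s * (1 + s⁻¹)⁻¹ := by
      have h2 : (1 + s⁻¹)⁻¹ = s * (1 + s)⁻¹ := by
        refine inv_eq_of_mul_eq_one_right ?_
        field_simp
        ring
      rw [h2, div_mul_eq_mul_div, eq_div_iff hs]
      ring
    rw [this]
    exact mul_mem hts (one_add_small hsi).2.1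

lemma mem_of_one_add_small {V : Zar F} {x : F} (h : 1 + x ∈ mIdeal V) : x ∈ V.1 := by
  have : x = (1 + x) - 1 := by ring
  exact this ▸ V.1.sub_mem h.1 V.1.one_mem

lemma finite_good {X : Set (Zar F)} (hF : X.Finite) {t : F} (ht : t ≠ 0)
    {V₀ : Zar F} (hV₀ : V₀ ∈ X) (htV₀ : t ∉ V₀.1) :
    ∃ s : F, s ≠ 0 ∧ 1 + s ≠ 0 ∧ (∀ V ∈ X, t ∉ V.1 → t / s ∈ V.1) ∧
      (∀ V ∈ X, t ∈ mIdeal V → s / t ∈ V.1) ∧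
      (∀ V ∈ X, t ∈ V.1 → t⁻¹ ∈ V.1 → 1 + s ∉ mIdeal V) := by
  classical
  set T : F → F := fun s => s ^ 2 * (1 + s)⁻¹ with hT
  set seq : ℕ → F := fun m => T^[m] t with hseq
  have hseqS : ∀ m, seq (m + 1) = T (seq m) := by
    intro m; simp [hseq, Function.iterate_succ_apply']
  -- the invariant
  have hInv : ∀ m, seq m ≠ 0 ∧
      (∀ V ∈ X, t ∉ V.1 → t / seq m ∈ V.1 ∧ seq m ∉ V.1) ∧
      (∀ V ∈ X, t ∈ mIdeal V → seq m / t ∈ V.1 ∧ seq m ∈ mIdeal V) := by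
    intro m
    induction m with
    | zero =>
      exact ⟨ht, fun V hV h => ⟨by rw [show seq 0 = t from rfl, div_self ht]; exact V.1.one_mem, h⟩,
        fun V hV h => ⟨by rw [show seq 0 = t from rfl, div_self ht]; exact V.1.one_mem, h⟩⟩
    | succ m ih =>
      obtain ⟨hs0, hN, hP⟩ := ih
      set s := seq m with hsdef
      have h1s : (1 : F) + s ≠ 0 := by
        intro h0
        have hsm1 : s = -1 := by linear_combination h0
        exact (hN V₀ hV₀ htV₀).2 (hsm1 ▸ V₀.1.neg_mem V₀.1.one_mem)
      have hTs0 : T s ≠ 0 := by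
        simp only [hT]
        exact mul_ne_zero (pow_ne_zero _ hs0) (inv_ne_zero h1s)
      refine ⟨by rw [hseqS]; exact hTs0, ?_, ?_⟩
      · intro V hV htV
        obtain ⟨hts, hsV⟩ := hN V hV htV
        have hsi : s⁻¹ ∈ mIdeal V := inv_small_of_not_mem hsV
        constructor
        · rw [hseqS]
          have hrw : t / T s = t / s * (1 + s⁻¹) := by
            simp only [hT]
            field_simp
            ring
          rw [hrw]
          exact V.1.mul_mem hts (V.1.add_mem V.1.one_mem hsi.1)
        · rw [hseqS]
          refine not_mem_of_inv_small hTs0 ?_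
          have hrw : (T s)⁻¹ = s⁻¹ * (1 + s⁻¹) := by
            simp only [hT]
            field_simp
            ring
          rw [hrw]
          exact zsmall_mul hsi (V.1.add_mem V.1.one_mem hsi.1)
      · intro V hV htm
        obtain ⟨hst, hssm⟩ := hP V hV htm
        have h1 := one_add_small hssm
        constructor
        · rw [hseqS]
          have hrw : T s / t = s / t * (s * (1 + s)⁻¹) := by
            simp only [hT]
            field_simp
          rw [hrw]
          exact V.1.mul_mem hst (V.1.mul_mem hssm.1 h1.2.1)
        · rw [hseqS]
          have hrw : T s = s * (s * (1 + s)⁻¹) := by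
            simp only [hT]; ring
          rw [hrw]
          exact zsmall_mul hssm (V.1.mul_mem hssm.1 h1.2.1)
  have h1sm : ∀ m, (1 : F) + seq m ≠ 0 := by
    intro m h0
    have hsm1 : seq m = -1 := by linear_combination h0
    exact ((hInv m).2.1 V₀ hV₀ htV₀).2 (hsm1 ▸ V₀.1.neg_mem V₀.1.one_mem)
  -- propagation: once bad, gone forever
  have hprop : ∀ (V : Zar F), V ∈ X → t ∈ V.1 → t⁻¹ ∈ V.1 →
      ∀ m, 1 + seq m ∈ mIdeal V → ∀ k, m < k → seq k ∉ V.1 := by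
    intro V hV ht1 ht2 m hbad k hmk
    induction k, hmk using Nat.le_induction with
    | base =>
      -- seq (m+1) ∉ V
      set s := seq m with hsdef
      have hs0 : s ≠ 0 := (hInv m).1
      have hsV : s ∈ V.1 := mem_of_one_add_small hbad
      have hsns : s ∉ mIdeal V := by
        intro hsm
        refine one_not_small (V := V) ?_
        have : (1 : F) = (1 + s) + (-s) := by ring
        exact this ▸ zsmall_add hbad (zsmall_neg hsm)
      have hsi : s⁻¹ ∈ V.1 := inv_mem_of_not_small hs0 hsV hsns
      have hTs0 : T s ≠ 0 := by
        simp only [hT]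
        exact mul_ne_zero (pow_ne_zero _ hs0) (inv_ne_zero (h1sm m))
      rw [hseqS]
      refine not_mem_of_inv_small hTs0 ?_
      have hrw : (T s)⁻¹ = (1 + s) * (s⁻¹ * s⁻¹) := by
        refine inv_eq_of_mul_eq_one_right ?_
        simp only [hT]
        field_simp
        exact div_self (h1sm m)
      rw [hrw]
      exact zsmall_mul hbad (V.1.mul_mem hsi hsi)
    | succ k hk ihk =>
      -- seq k ∉ V → seq (k+1) ∉ V
      set s := seq k with hsdef
      have hs0 : s ≠ 0 := (hInv k).1
      have hsi : s⁻¹ ∈ mIdeal V := inv_small_of_not_mem ihk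
      have hTs0 : T s ≠ 0 := by
        simp only [hT]
        exact mul_ne_zero (pow_ne_zero _ hs0) (inv_ne_zero (h1sm k))
      rw [hseqS]
      refine not_mem_of_inv_small hTs0 ?_
      have hrw : (T s)⁻¹ = s⁻¹ * (1 + s⁻¹) := by
        simp only [hT]
        field_simp
        ring
      rw [hrw]
      exact zsmall_mul hsi (V.1.add_mem V.1.one_mem hsi.1)
  -- pigeonhole
  haveI := hF.fintype
  set n := Fintype.card X with hn
  by_cases hgood : ∃ m, ∀ V ∈ X, t ∈ V.1 → t⁻¹ ∈ V.1 → 1 + seq m ∉ mIdeal V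
  · obtain ⟨m, hm⟩ := hgood
    exact ⟨seq m, (hInv m).1, h1sm m, fun V hV h => ((hInv m).2.1 V hV h).1,
      fun V hV h => ((hInv m).2.2 V hV h).1, hm⟩
  · exfalso
    push_neg at hgood
    have hbadm : ∀ m : ℕ, ∃ V : X, t ∈ (V : Zar F).1 ∧ t⁻¹ ∈ (V : Zar F).1 ∧
        1 + seq m ∈ mIdeal (V : Zar F) := by
      intro m
      obtain ⟨V, hV, h1, h2, h3⟩ := hgood m
      exact ⟨⟨V, hV⟩, h1, h2, h3⟩
    have hginj : Function.Injective (fun i : Fin (n + 1) => ((hbadm i).choose : X)) := by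
      intro i j hij
      simp only at hij
      by_contra hne
      wlog hlt : (i : ℕ) < (j : ℕ) generalizing i j
      · exact this hij.symm (Ne.symm hne) (by omega)
      obtain ⟨hi1, hi2, hi3⟩ := (hbadm (i : ℕ)).choose_spec
      obtain ⟨hj1, hj2, hj3⟩ := (hbadm (j : ℕ)).choose_spec
      rw [hij] at hi1 hi2 hi3
      set W := ((hbadm (j : ℕ)).choose : X) with hW
      exact hprop (W : Zar F) W.2 hi1 hi2 i hi3 j hlt (mem_of_one_add_small hj3)
    have := Fintype.card_le_of_injective _ hginj
    simp [hn] at this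

lemma infinite_good {X : Set (Zar F)} {B : Subring F} (hBsub : (B : Set F) ⊆ aSet X)
    [hB : IsLocalRing B]
    (hbig : Cardinal.mk X + 1 < Cardinal.mk (IsLocalRing.ResidueField B))
    {t : F} (ht : t ≠ 0) :
    ∃ c : F, c ∈ B ∧ c⁻¹ ∈ B ∧ c ≠ 0 ∧
      ∀ V ∈ X, t ∈ V.1 → t⁻¹ ∈ V.1 → 1 + c * t ∉ mIdeal V := by
  classical
  have hBV : ∀ {V : Zar F}, V ∈ X → ∀ {x : F}, x ∈ B → x ∈ V.1 := by
    intro V hV x hx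
    have := hBsub hx
    rw [aSet, Set.mem_iInter₂] at this
    exact this V hV
  set k := IsLocalRing.ResidueField B with hk
  set res : B → k := ⇑(IsLocalRing.residue B) with hres
  set φ : X → k := fun V =>
    if h : ∃ c : B, IsUnit c ∧ 1 + (c : F) * t ∈ mIdeal (V : Zar F) then res h.choose
    else 0 with hφ
  have hcard : Cardinal.mk (insert (0 : k) (Set.range φ) : Set k) < Cardinal.mk k := by
    refine lt_of_le_of_lt ((Cardinal.mk_insert_le).trans ?_) hbig
    exact add_le_add Cardinal.mk_range_le le_rfl
  have hne : (insert (0 : k) (Set.range φ) : Set k) ≠ Set.univ := by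
    intro h
    rw [h, Cardinal.mk_univ] at hcard
    exact lt_irrefl _ hcard
  obtain ⟨r, hr⟩ := (Set.ne_univ_iff_exists_notMem _).mp hne
  simp only [Set.mem_insert_iff, not_or] at hr
  obtain ⟨hr0, hrr⟩ := hr
  obtain ⟨c₀, hc₀⟩ := IsLocalRing.residue_surjective (R := B) r
  have hc₀u : IsUnit c₀ := by
    rw [← IsLocalRing.notMem_maximalIdeal]
    intro hm
    exact hr0 (hc₀ ▸ (Ideal.Quotient.eq_zero_iff_mem.mpr hm))
  obtain ⟨d, hd⟩ := isUnit_iff_exists_inv.mp hc₀u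
  have hcd : (c₀ : F) * (d : F) = 1 := by
    have := congrArg (fun z : B => (z : F)) hd
    push_cast at this
    exact this
  have hc0 : (c₀ : F) ≠ 0 := by
    intro h0
    rw [h0, zero_mul] at hcd
    exact one_ne_zero hcd.symm
  have hcinv : ((c₀ : F))⁻¹ = (d : F) := inv_eq_of_mul_eq_one_right hcd
  refine ⟨(c₀ : F), c₀.2, hcinv ▸ d.2, hc0, ?_⟩
  intro V hV ht1 ht2 hbad
  have hex : ∃ c : B, IsUnit c ∧ 1 + (c : F) * t ∈ mIdeal V := ⟨c₀, hc₀u, hbad⟩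
  have hφV : φ ⟨V, hV⟩ = res hex.choose := by
    rw [hφ]
    simp only [dif_pos hex]
  obtain ⟨hc₁u, hbad₁⟩ := hex.choose_spec
  set c₁ : B := hex.choose with hc₁
  -- residues of c₀ and c₁ agree
  have hsmall : ((c₀ - c₁ : B) : F) ∈ mIdeal V := by
    have h1 : ((c₀ : F) - (c₁ : F)) * t ∈ mIdeal V := by
      have : ((c₀ : F) - (c₁ : F)) * t = (1 + (c₀ : F) * t) + (-(1 + (c₁ : F) * t)) := by
        ring
      rw [this]
      exact zsmall_add hbad (zsmall_neg hbad₁)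
    have h2 : ((c₀ : F) - (c₁ : F)) = (((c₀ : F) - (c₁ : F)) * t) * t⁻¹ := by
      field_simp
    push_cast
    rw [h2]
    exact zsmall_mul h1 ht2
  have hres01 : res c₀ = res c₁ := by
    by_contra hne'
    have hdu : IsUnit (c₀ - c₁) := by
      rw [← IsLocalRing.notMem_maximalIdeal]
      intro hm
      have : res (c₀ - c₁) = 0 := Ideal.Quotient.eq_zero_iff_mem.mpr hm
      rw [hres] at this
      rw [map_sub] at this
      exact hne' (by rwa [sub_eq_zero] at this)
    obtain ⟨e, he⟩ := isUnit_iff_exists_inv.mp hdu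
    have hcde : ((c₀ - c₁ : B) : F) * (e : F) = 1 := by
      have := congrArg (fun z : B => (z : F)) he
      push_cast at this
      exact this
    have hd0 : ((c₀ - c₁ : B) : F) ≠ 0 := by
      intro h0
      rw [h0, zero_mul] at hcde
      exact one_ne_zero hcde.symm
    have hdinv : (((c₀ - c₁ : B) : F))⁻¹ ∈ V.1 :=
      (inv_eq_of_mul_eq_one_right hcde) ▸ hBV hV e.2
    rcases hsmall.2 with h0 | h0
    · exact hd0 h0
    · exact h0 hdinv
  exact hrr ⟨⟨V, hV⟩, by rw [hφV, ← hres01]; exact hc₀⟩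

theorem stmt17 (X : Set (Zar F)) (hX : X.Nonempty) (α : Cardinal)
    (h : ∃ B : Subring F, (B : Set F) ⊆ aSet X ∧
      ∃ hB : IsLocalRing B, Cardinal.mk (@IsLocalRing.ResidueField B _ hB) = α)
    (hcard : Cardinal.mk X < Cardinal.aleph0 * α) :
    IsPruferOf (ASub X) := by
  classical
  obtain ⟨B, hBsub, hB, hres⟩ := h
  haveI := hB
  have hmem : ∀ {x : F}, x ∈ ASub X ↔ ∀ V ∈ X, x ∈ V.1 := by
    intro x
    simp [ASub, Subring.mem_iInf]
  have hmemA : ∀ {x : F}, x ∈ aSet X ↔ ∀ V ∈ X, x ∈ V.1 := by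
    intro x
    simp [aSet, Set.mem_iInter₂]
  -- the key claim
  have dagger : ∀ t : F, t ≠ 0 → ∃ u : F, (∀ V ∈ X, u ∈ V.1) ∧
      (∀ V ∈ X, u * t ∈ V.1) ∧ (∀ V ∈ X, (1 - u) * t⁻¹ ∈ V.1) := by
    intro t ht
    by_cases htA : ∀ V ∈ X, t ∈ V.1
    · exact ⟨1, fun V hV => V.1.one_mem, fun V hV => by simpa using htA V hV,
        fun V hV => by simpa using V.1.zero_mem⟩
    push_neg at htA
    obtain ⟨V₀, hV₀, htV₀⟩ := htA
    have hgood : ∃ s : F, s ≠ 0 ∧ 1 + s ≠ 0 ∧ (∀ V ∈ X, t ∉ V.1 → t / s ∈ V.1) ∧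
        (∀ V ∈ X, t ∈ mIdeal V → s / t ∈ V.1) ∧
        (∀ V ∈ X, t ∈ V.1 → t⁻¹ ∈ V.1 → 1 + s ∉ mIdeal V) := by
      by_cases hF : X.Finite
      · exact finite_good hF ht hV₀ htV₀
      · -- infinite case
        have hXinf : Cardinal.aleph0 ≤ Cardinal.mk X := by
          rw [Cardinal.aleph0_le_mk_iff]
          exact Set.infinite_coe_iff.mpr hF
        have hα : Cardinal.aleph0 ≤ α := by
          by_contra hlt
          push_neg at hlt
          have : Cardinal.aleph0 * α ≤ Cardinal.aleph0 := by
            calc Cardinal.aleph0 * α ≤ Cardinal.aleph0 * Cardinal.aleph0 :=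
                  by gcongr
              _ = Cardinal.aleph0 := Cardinal.aleph0_mul_aleph0
          exact absurd (hcard.trans_le this) (not_lt.mpr hXinf)
        have hXα : Cardinal.mk X < α := by
          rwa [Cardinal.mul_eq_max le_rfl hα, max_eq_right hα] at hcard
        have hbig : Cardinal.mk X + 1 < Cardinal.mk (IsLocalRing.ResidueField B) := by
          rw [hres]
          exact Cardinal.add_lt_of_lt hα hXα (lt_of_lt_of_le Cardinal.one_lt_aleph0 hα)
        obtain ⟨c, hcB, hciB, hc0, hcprop⟩ := infinite_good hBsub hbig ht
        have hcV : ∀ V ∈ X, c ∈ V.1 := fun V hV => hmemA.mp (hBsub hcB) V hV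
        have hciV : ∀ V ∈ X, c⁻¹ ∈ V.1 := fun V hV => hmemA.mp (hBsub hciB) V hV
        refine ⟨c * t, mul_ne_zero hc0 ht, ?_, ?_, ?_, hcprop⟩
        · -- 1 + c * t ≠ 0
          intro h0
          have h2 : t = c⁻¹ * (c * t) := by field_simp
          have h3 : c * t = -1 := by linear_combination h0
          rw [h3, mul_neg_one] at h2
          exact htV₀ (h2 ▸ V₀.1.neg_mem (hciV V₀ hV₀))
        · intro V hV htV
          have : t / (c * t) = c⁻¹ := by
            field_simp
          rw [this]
          exact hciV V hV
        · intro V hV htm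
          have : c * t / t = c := by
            field_simp
          rw [this]
          exact hcV V hV
    obtain ⟨s, hs0, h1s, hN, hP, hU⟩ := hgood
    exact ⟨(1 + s)⁻¹,
      fun V hV => (perV V ht hs0 h1s (hN V hV) (hP V hV) (hU V hV)).1,
      fun V hV => (perV V ht hs0 h1s (hN V hV) (hP V hV) (hU V hV)).2.1,
      fun V hV => (perV V ht hs0 h1s (hN V hV) (hP V hV) (hU V hV)).2.2⟩
  constructor
  · -- HasQFSet
    intro x
    by_cases hx : x = 0
    · refine ⟨0, ?_, 1, ?_, one_ne_zero, by simp [hx]⟩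
      · exact hmem.mpr fun V hV => V.1.zero_mem
      · exact hmem.mpr fun V hV => V.1.one_mem
    obtain ⟨u, hu, hut, hu'⟩ := dagger x hx
    by_cases hu0 : u = 0
    · refine ⟨1, hmem.mpr fun V hV => V.1.one_mem, x⁻¹, ?_, inv_ne_zero hx,
        by rw [one_div, inv_inv]⟩
      refine hmem.mpr fun V hV => ?_
      have h1 := hu' V hV
      rw [hu0] at h1
      simpa using h1
    · refine ⟨u * x, hmem.mpr (hut · ·), u, hmem.mpr (hu · ·), hu0, ?_⟩
      rw [mul_comm, mul_div_assoc, div_self hu0, mul_one]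
  · -- localizations
    intro M hM t ht
    obtain ⟨u, hu, hut, hu'⟩ := dagger t ht
    have huA : u ∈ ASub X := hmem.mpr (hu · ·)
    have hutA : u * t ∈ ASub X := hmem.mpr (hut · ·)
    have hu'A : (1 - u) * t⁻¹ ∈ ASub X := hmem.mpr (hu' · ·)
    set uA : ASub X := ⟨u, huA⟩ with huAdef
    set vA : ASub X := ⟨1 - u, (ASub X).sub_mem (ASub X).one_mem huA⟩ with hvAdef
    by_cases hMu : uA ∈ M
    · right
      have hvM : vA ∉ M := by
        intro hvM
        have : (1 : ASub X) ∈ M := by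
          have : uA + vA = 1 := by
            ext
            simp [huAdef, hvAdef]
          exact this ▸ M.add_mem hMu hvM
        exact hM.ne_top (M.eq_top_of_isUnit_mem this isUnit_one)
      have hv0 : ((vA : ASub X) : F) ≠ 0 := by
        intro h0
        have : vA = 0 := by ext; simpa using h0
        exact hvM (this ▸ M.zero_mem)
      refine ⟨⟨(1 - u) * t⁻¹, hu'A⟩, vA, hvM, hv0, ?_⟩
      show t⁻¹ = ((1 - u) * t⁻¹) / (1 - u)
      rw [mul_comm, mul_div_assoc, div_self (show (1 - u : F) ≠ 0 from hv0), mul_one]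
    · left
      have hu0 : ((uA : ASub X) : F) ≠ 0 := by
        intro h0
        have : uA = 0 := by ext; simpa using h0
        exact hMu (this ▸ M.zero_mem)
      refine ⟨⟨u * t, hutA⟩, uA, hMu, hu0, ?_⟩
      show t = (u * t) / u
      rw [mul_comm, mul_div_assoc, div_self (show (u : F) ≠ 0 from hu0), mul_one]
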